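/- arXiv:2209.05721 — 2 statements merged into one kernel-verified Lean document; each statement's English description precedes it below -/
import Mathlib

section
/- For p ∈ (1, ∞), the function Q_p(q) := 2 E_{1,p}(q)/K_{1,p}(q) - 1 is strictly decreasing on [0, 1), satisfies Q_p(0) = 1, and its limit as q ↑ 1 equals -1 if 1 < p ≤ 2 and equals -1/(p-1) if p > 2. -/
set_option maxHeartbeats 1000000




open Real Filter MeasureTheory intervalIntegral Set

/-- The complete `p`-elliptic integral of the first kind. -/
noncomputable def K1 (p q : ℝ) : ℝ :=
  ∫ θ in (0:ℝ)..(π / 2), Real.cos θ ^ (1 - 2 / p) / Real.sqrt (1 - q ^ 2 * Real.sin θ ^ 2)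

/-- The complete `p`-elliptic integral of the second kind. -/
noncomputable def E1 (p q : ℝ) : ℝ :=
  ∫ θ in (0:ℝ)..(π / 2), Real.sqrt (1 - q ^ 2 * Real.sin θ ^ 2) * Real.cos θ ^ (1 - 2 / p)

/-- The ratio function `Q_p`. -/
noncomputable def Qp (p q : ℝ) : ℝ := 2 * E1 p q / K1 p q - 1

lemma cos_lower (θ : ℝ) (h0 : 0 ≤ θ) (h1 : θ ≤ π/2) : 2/π * (π/2 - θ) ≤ Real.cos θ := by
  rw [← Real.sin_pi_div_two_sub]
  exact Real.mul_le_sin (by linarith) (by linarith)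
lemma cos_upper (θ : ℝ) (h0 : 0 ≤ θ) (h1 : θ ≤ π/2) : Real.cos θ ≤ π/2 - θ := by
  rw [← Real.sin_pi_div_two_sub]
  exact Real.sin_le (by linarith)
lemma aux_int {a : ℝ} (ha : -1 < a) :
    IntervalIntegrable (fun θ => (2/π * (π/2 - θ)) ^ a) volume 0 (π/2) := by
  have h0 : IntervalIntegrable (fun x : ℝ => x ^ a) volume 0 1 :=
    intervalIntegral.intervalIntegrable_rpow' ha
  have h1 := h0.comp_mul_left (c := 2/π)
  have hπ : (0:ℝ)/(2/π) = 0 := by simp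
  have hπ2 : (1:ℝ)/(2/π) = π/2 := by field_simp
  rw [hπ, hπ2] at h1
  have h2 := h1.comp_sub_left (π/2)
  simpa using h2.symm
lemma ae_cos_ne : ∀ᵐ θ : ℝ, Real.cos θ ≠ 0 := by
  have hc : {θ : ℝ | Real.cos θ = 0}.Countable := by
    have hsub : {θ : ℝ | Real.cos θ = 0} ⊆ Set.range (fun k : ℤ => ((2 * k + 1) * π / 2 : ℝ)) := by
      intro x hx
      rcases Real.cos_eq_zero_iff.mp hx with ⟨k, hk⟩
      exact ⟨k, hk.symm⟩
    exact Set.Countable.mono hsub (Set.countable_range _)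
  exact MeasureTheory.measure_eq_zero_iff_ae_notMem.mp (hc.measure_zero _)
lemma aesm_cos_rpow (a : ℝ) (s : Set ℝ) (hs : MeasurableSet s) (hsub : s ⊆ Set.Icc 0 (π/2)) :
    MeasureTheory.AEStronglyMeasurable (fun θ => Real.cos θ ^ a) (volume.restrict s) := by
  have hm : MeasureTheory.AEStronglyMeasurable (fun θ => Real.exp (Real.log (Real.cos θ) * a))
      (volume.restrict s) :=
    ((Real.measurable_log.comp Real.measurable_cos).mul_const a).exp.aestronglyMeasurable
  refine hm.congr ?_
  filter_upwards [MeasureTheory.ae_restrict_of_ae ae_cos_ne,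
    MeasureTheory.self_mem_ae_restrict hs] with θ h1 h2
  have h3 := hsub h2
  have hpos : 0 < Real.cos θ :=
    lt_of_le_of_ne (Real.cos_nonneg_of_mem_Icc ⟨by linarith [h3.1, Real.pi_pos], h3.2⟩) (Ne.symm h1)
  rw [Real.rpow_def_of_pos hpos]
lemma cos_rpow_int {a : ℝ} (ha : -1 < a) :
    IntervalIntegrable (fun θ => Real.cos θ ^ a) volume 0 (π/2) := by
  have hg : IntervalIntegrable (fun θ => (2/π * (π/2 - θ)) ^ a + 1) volume 0 (π/2) :=
    (aux_int ha).add intervalIntegrable_const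
  refine hg.mono_fun' ?_ ?_
  · exact aesm_cos_rpow a _ measurableSet_uIoc (by
      rw [Set.uIoc_of_le (by positivity : (0:ℝ) ≤ π/2)]
      exact Set.Ioc_subset_Icc_self.trans (by norm_num))
  · rw [Filter.EventuallyLE, ae_restrict_iff' measurableSet_uIoc]
    filter_upwards with θ hθ
    rw [Set.uIoc_of_le (by positivity)] at hθ
    obtain ⟨hθ0, hθ1⟩ := hθ
    have hc0 : 0 ≤ Real.cos θ := Real.cos_nonneg_of_mem_Icc ⟨by linarith, hθ1⟩
    simp only [Real.norm_eq_abs, abs_of_nonneg (Real.rpow_nonneg hc0 a)]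
    have hb0 : (0:ℝ) ≤ 2/π * (π/2 - θ) := by
      have := Real.pi_pos
      refine mul_nonneg (by positivity) (by linarith)
    have hbn : (0:ℝ) ≤ (2/π * (π/2 - θ)) ^ a := Real.rpow_nonneg hb0 a
    rcases le_or_gt 0 a with h | h
    · have h1 : Real.cos θ ^ a ≤ 1 := Real.rpow_le_one hc0 (Real.cos_le_one θ) h
      linarith
    · rcases eq_or_lt_of_le hθ1 with heq | hlt
      · subst heq
        rw [Real.cos_pi_div_two, Real.zero_rpow (by linarith : a ≠ 0)]
        linarith
      · have hb : 0 < 2/π * (π/2 - θ) := by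
          have := Real.pi_pos
          refine mul_pos (by positivity) (by linarith)
        have h2 := Real.rpow_le_rpow_of_nonpos hb (cos_lower θ hθ0.le hθ1) h.le
        linarith
lemma ha_of_hp {p : ℝ} (hp : 1 < p) : -1 < 1 - 2/p := by
  have h1 : 2/p < 2 := by
    rw [div_lt_iff₀ (by linarith)]; nlinarith
  linarith
lemma sq_sin_le_one (θ : ℝ) : Real.sin θ ^ 2 ≤ 1 := Real.sin_sq_le_one θ
lemma disc_pos {q : ℝ} (hq0 : 0 ≤ q) (hq1 : q < 1) (θ : ℝ) :
    0 < 1 - q^2 * Real.sin θ^2 := by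
  nlinarith [sq_sin_le_one θ, sq_nonneg (Real.sin θ), sq_nonneg q]
lemma disc_le_one (q θ : ℝ) : 1 - q^2 * Real.sin θ^2 ≤ 1 := by
  nlinarith [sq_nonneg (q * Real.sin θ)]
lemma uIoc_sub : Set.uIoc (0:ℝ) (π/2) ⊆ Set.Icc 0 (π/2) := by
  rw [Set.uIoc_of_le (by positivity : (0:ℝ) ≤ π/2)]
  exact Set.Ioc_subset_Icc_self.trans (by norm_num)
lemma aesm_sqrt_disc (q : ℝ) (s : Set ℝ) :
    MeasureTheory.AEStronglyMeasurable (fun θ => Real.sqrt (1 - q^2 * Real.sin θ^2))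
      (volume.restrict s) := by
  refine Continuous.aestronglyMeasurable ?_
  exact Real.continuous_sqrt.comp (by continuity)
lemma aesm_K (p q : ℝ) :
    MeasureTheory.AEStronglyMeasurable
      (fun θ => Real.cos θ ^ (1 - 2/p) / Real.sqrt (1 - q^2 * Real.sin θ^2))
      (volume.restrict (Set.uIoc 0 (π/2))) := by
  have h1 := aesm_cos_rpow (1-2/p) _ measurableSet_uIoc uIoc_sub
  have h2 : Measurable (fun θ => (Real.sqrt (1 - q^2*Real.sin θ^2))⁻¹) :=
    ((Real.continuous_sqrt.comp (by continuity)).measurable).inv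
  have h3 := h1.mul h2.aestronglyMeasurable
  exact h3.congr (Filter.Eventually.of_forall fun θ => (div_eq_mul_inv _ _).symm)
lemma K_int {p q : ℝ} (hp : 1 < p) (hq0 : 0 ≤ q) (hq1 : q < 1) :
    IntervalIntegrable
      (fun θ => Real.cos θ ^ (1 - 2/p) / Real.sqrt (1 - q^2 * Real.sin θ^2)) volume 0 (π/2) := by
  have hd : 0 < 1 - q^2 := by nlinarith
  have hg : IntervalIntegrable (fun θ => (Real.sqrt (1 - q^2))⁻¹ * Real.cos θ ^ (1 - 2/p))
      volume 0 (π/2) := (cos_rpow_int (ha_of_hp hp)).const_mul _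
  refine hg.mono_fun ?_ ?_
  · exact aesm_K p q
  · filter_upwards [MeasureTheory.self_mem_ae_restrict
      (measurableSet_uIoc : MeasurableSet (Set.uIoc (0:ℝ) (π/2)))] with θ hθ
    have h3 := uIoc_sub hθ
    have hc0 : 0 ≤ Real.cos θ := Real.cos_nonneg_of_mem_Icc ⟨by linarith [h3.1, Real.pi_pos], h3.2⟩
    have hrn : 0 ≤ Real.cos θ ^ (1 - 2/p) := Real.rpow_nonneg hc0 _
    have hs1 : Real.sqrt (1 - q^2) ≤ Real.sqrt (1 - q^2 * Real.sin θ^2) := by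
      apply Real.sqrt_le_sqrt; nlinarith [sq_sin_le_one θ, sq_nonneg q]
    have hs0 : 0 < Real.sqrt (1 - q^2) := Real.sqrt_pos.mpr hd
    have hs0' : 0 < Real.sqrt (1 - q^2 * Real.sin θ^2) := lt_of_lt_of_le hs0 hs1
    simp only [Real.norm_eq_abs]
    rw [abs_of_nonneg (div_nonneg hrn hs0'.le),
      abs_of_nonneg (mul_nonneg (inv_nonneg.mpr hs0.le) hrn)]
    rw [div_eq_inv_mul]
    exact mul_le_mul_of_nonneg_right (by
      exact inv_anti₀ hs0 hs1) hrn
lemma E_int {p q : ℝ} (hp : 1 < p) :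
    IntervalIntegrable
      (fun θ => Real.sqrt (1 - q^2 * Real.sin θ^2) * Real.cos θ ^ (1 - 2/p)) volume 0 (π/2) := by
  have hg := cos_rpow_int (ha_of_hp hp)
  refine hg.mono_fun ?_ ?_
  · exact (aesm_sqrt_disc q _).mul (aesm_cos_rpow _ _ measurableSet_uIoc uIoc_sub)
  · filter_upwards [MeasureTheory.self_mem_ae_restrict
      (measurableSet_uIoc : MeasurableSet (Set.uIoc (0:ℝ) (π/2)))] with θ hθ
    have h3 := uIoc_sub hθ
    have hc0 : 0 ≤ Real.cos θ := Real.cos_nonneg_of_mem_Icc ⟨by linarith [h3.1, Real.pi_pos], h3.2⟩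
    have hrn : 0 ≤ Real.cos θ ^ (1 - 2/p) := Real.rpow_nonneg hc0 _
    have hsq : Real.sqrt (1 - q^2 * Real.sin θ^2) ≤ 1 := by
      have h := Real.sqrt_le_sqrt (disc_le_one q θ)
      simpa using h
    simp only [Real.norm_eq_abs]
    rw [abs_of_nonneg (mul_nonneg (Real.sqrt_nonneg _) hrn), abs_of_nonneg hrn]
    nlinarith [Real.sqrt_nonneg (1 - q^2 * Real.sin θ^2)]
lemma cos_pos_Ioo {θ : ℝ} (hθ : θ ∈ Set.Ioo 0 (π/2)) : 0 < Real.cos θ :=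
  Real.cos_pos_of_mem_Ioo ⟨by linarith [hθ.1, Real.pi_pos], hθ.2⟩
lemma K_pos {p q : ℝ} (hp : 1 < p) (hq0 : 0 ≤ q) (hq1 : q < 1) : 0 < K1 p q := by
  refine intervalIntegral_pos_of_pos_on (K_int hp hq0 hq1) (fun θ hθ => ?_) (by positivity)
  exact div_pos (Real.rpow_pos_of_pos (cos_pos_Ioo hθ) _)
    (Real.sqrt_pos.mpr (disc_pos hq0 hq1 θ))
lemma E_pos {p q : ℝ} (hp : 1 < p) (hq0 : 0 ≤ q) (hq1 : q < 1) : 0 < E1 p q := by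
  refine intervalIntegral_pos_of_pos_on (E_int hp) (fun θ hθ => ?_) (by positivity)
  exact mul_pos (Real.sqrt_pos.mpr (disc_pos hq0 hq1 θ)) (Real.rpow_pos_of_pos (cos_pos_Ioo hθ) _)
lemma sqrt_disc_lt {q1 q2 θ : ℝ} (hq0 : 0 ≤ q1) (h12 : q1 < q2) (hq2 : q2 < 1)
    (hθ : θ ∈ Set.Ioo 0 (π/2)) :
    Real.sqrt (1 - q2^2 * Real.sin θ^2) < Real.sqrt (1 - q1^2 * Real.sin θ^2) := by
  have hs : 0 < Real.sin θ := Real.sin_pos_of_pos_of_lt_pi hθ.1 (by linarith [hθ.2, Real.pi_pos])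
  have := disc_pos (le_trans hq0 h12.le) hq2 θ
  apply Real.sqrt_lt_sqrt this.le
  have hq : q1^2 < q2^2 := by nlinarith
  have hs2 : 0 < Real.sin θ^2 := by positivity
  nlinarith [mul_lt_mul_of_pos_right hq hs2]
lemma K_lt {p q1 q2 : ℝ} (hp : 1 < p) (hq0 : 0 ≤ q1) (h12 : q1 < q2) (hq2 : q2 < 1) :
    K1 p q1 < K1 p q2 := by
  have hq1 : q1 < 1 := lt_trans h12 hq2
  have hpos : 0 < ∫ θ in (0:ℝ)..(π/2),
      (Real.cos θ ^ (1 - 2/p) / Real.sqrt (1 - q2^2 * Real.sin θ^2)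
        - Real.cos θ ^ (1 - 2/p) / Real.sqrt (1 - q1^2 * Real.sin θ^2)) := by
    refine intervalIntegral_pos_of_pos_on
      ((K_int hp (le_trans hq0 h12.le) hq2).sub (K_int hp hq0 hq1)) (fun θ hθ => ?_) (by positivity)
    have hA : 0 < Real.cos θ ^ (1 - 2/p) := Real.rpow_pos_of_pos (cos_pos_Ioo hθ) _
    have h2 : 0 < Real.sqrt (1 - q2^2 * Real.sin θ^2) :=
      Real.sqrt_pos.mpr (disc_pos (le_trans hq0 h12.le) hq2 θ)
    have := div_lt_div_of_pos_left hA h2 (sqrt_disc_lt hq0 h12 hq2 hθ)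
    linarith
  rw [intervalIntegral.integral_sub (K_int hp (le_trans hq0 h12.le) hq2) (K_int hp hq0 hq1)]
    at hpos
  unfold K1
  linarith
lemma E_lt {p q1 q2 : ℝ} (hp : 1 < p) (hq0 : 0 ≤ q1) (h12 : q1 < q2) (hq2 : q2 < 1) :
    E1 p q2 < E1 p q1 := by
  have hq1 : q1 < 1 := lt_trans h12 hq2
  have hpos : 0 < ∫ θ in (0:ℝ)..(π/2),
      (Real.sqrt (1 - q1^2 * Real.sin θ^2) * Real.cos θ ^ (1 - 2/p)
        - Real.sqrt (1 - q2^2 * Real.sin θ^2) * Real.cos θ ^ (1 - 2/p)) := by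
    refine intervalIntegral_pos_of_pos_on
      ((E_int hp).sub (E_int hp)) (fun θ hθ => ?_) (by positivity)
    have hA : 0 < Real.cos θ ^ (1 - 2/p) := Real.rpow_pos_of_pos (cos_pos_Ioo hθ) _
    have := sqrt_disc_lt hq0 h12 hq2 hθ
    nlinarith
  rw [intervalIntegral.integral_sub (E_int hp) (E_int hp)] at hpos
  unfold E1
  linarith
lemma Qp_anti {p : ℝ} (hp : 1 < p) : StrictAntiOn (Qp p) (Set.Ico (0:ℝ) 1) := by
  intro q1 h1 q2 h2 h12
  have hq2 : q2 < 1 := h2.2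
  have hE2 := E_pos hp (le_trans h1.1 h12.le) hq2
  have hK1 := K_pos hp h1.1 h1.2
  have hK2 := K_pos hp (le_trans h1.1 h12.le) hq2
  have hE := E_lt hp h1.1 h12 hq2
  have hK := K_lt hp h1.1 h12 hq2
  unfold Qp
  have : 2 * E1 p q2 / K1 p q2 < 2 * E1 p q1 / K1 p q1 := by
    rw [div_lt_div_iff₀ hK2 hK1]
    nlinarith
  linarith
lemma Qp_zero {p : ℝ} (hp : 1 < p) : Qp p 0 = 1 := by
  have hEK : E1 p 0 = K1 p 0 := by
    unfold E1 K1
    congr 1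
    funext θ
    norm_num
  have hK := K_pos hp le_rfl one_pos
  unfold Qp
  rw [hEK, mul_div_assoc, div_self hK.ne', mul_one]
  norm_num
lemma tendsto_primitive {f : ℝ → ℝ} (hf : IntervalIntegrable f volume 0 (π/2)) :
    Tendsto (fun c => ∫ x in (0:ℝ)..c, f x) (nhdsWithin (π/2) (Set.Iio (π/2)))
      (nhds (∫ x in (0:ℝ)..(π/2), f x)) := by
  have hc : ContinuousOn (fun c => ∫ x in (0:ℝ)..c, f x) (Set.uIcc 0 (π/2)) :=
    intervalIntegral.continuousOn_primitive_interval' hf Set.left_mem_uIcc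
  have h2 : ContinuousWithinAt (fun c => ∫ x in (0:ℝ)..c, f x) (Set.uIcc 0 (π/2)) (π/2) :=
    hc _ Set.right_mem_uIcc
  have h3 : Tendsto (fun c => ∫ x in (0:ℝ)..c, f x) (nhdsWithin (π/2) (Set.uIcc 0 (π/2)))
      (nhds (∫ x in (0:ℝ)..(π/2), f x)) := h2
  refine h3.mono_left ?_
  rw [show nhdsWithin (π/2) (Set.Iio (π/2)) = nhdsWithin (π/2) (Set.Ico 0 (π/2)) from
    (nhdsWithin_Ico_eq_nhdsLT (by positivity)).symm]
  exact nhdsWithin_mono _ (by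
    rw [Set.uIcc_of_le (by positivity : (0:ℝ) ≤ π/2)]
    exact Set.Ico_subset_Icc_self)
lemma sinsq_cos_int {a : ℝ} (ha : 0 < a) :
    IntervalIntegrable (fun θ => Real.sin θ^2 * Real.cos θ ^ (a-1)) volume 0 (π/2) := by
  refine (cos_rpow_int (by linarith : (-1:ℝ) < a - 1)).mono_fun ?_ ?_
  · exact ((Real.measurable_sin.pow_const 2).aestronglyMeasurable).mul
      (aesm_cos_rpow _ _ measurableSet_uIoc uIoc_sub)
  · filter_upwards [MeasureTheory.self_mem_ae_restrict
      (measurableSet_uIoc : MeasurableSet (Set.uIoc (0:ℝ) (π/2)))] with θ hθ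
    have h3 := uIoc_sub hθ
    have hc0 : 0 ≤ Real.cos θ := Real.cos_nonneg_of_mem_Icc ⟨by linarith [h3.1, Real.pi_pos], h3.2⟩
    have hrn : 0 ≤ Real.cos θ ^ (a-1) := Real.rpow_nonneg hc0 _
    simp only [Real.norm_eq_abs]
    rw [abs_of_nonneg (mul_nonneg (by positivity) hrn), abs_of_nonneg hrn]
    nlinarith [Real.sin_sq_le_one θ, sq_nonneg (Real.sin θ)]
lemma beta_rec {a : ℝ} (ha : 0 < a) (ha1 : a < 1) :
    (1+a) * (∫ θ in (0:ℝ)..(π/2), Real.cos θ ^ (a+1))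
      = a * ∫ θ in (0:ℝ)..(π/2), Real.cos θ ^ (a-1) := by
  set I1 := ∫ θ in (0:ℝ)..(π/2), Real.cos θ ^ (a+1) with hI1
  set I0 := ∫ θ in (0:ℝ)..(π/2), Real.cos θ ^ (a-1) with hI0
  set Iss := ∫ θ in (0:ℝ)..(π/2), Real.sin θ^2 * Real.cos θ ^ (a-1) with hIss
  -- Step A : IBP identity on [0, c]
  have stepA : ∀ c ∈ Set.Ico (0:ℝ) (π/2),
      (∫ θ in (0:ℝ)..c, Real.cos θ ^ (a+1))
        = Real.cos c ^ a * Real.sin c + a * ∫ θ in (0:ℝ)..c, Real.sin θ^2 * Real.cos θ ^ (a-1) := by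
    intro c hc
    have hcos : ∀ x ∈ Set.uIcc (0:ℝ) c, 0 < Real.cos x := by
      intro x hx
      rw [Set.uIcc_of_le hc.1] at hx
      exact Real.cos_pos_of_mem_Ioo ⟨by linarith [hx.1, Real.pi_pos], lt_of_le_of_lt hx.2 hc.2⟩
    have hu : ∀ x ∈ Set.uIcc (0:ℝ) c,
        HasDerivAt (fun θ => Real.cos θ ^ a) (a * Real.cos x ^ (a-1) * (-Real.sin x)) x := by
      intro x hx
      exact (Real.hasDerivAt_rpow_const (Or.inl (hcos x hx).ne')).comp x (Real.hasDerivAt_cos x)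
    have hv : ∀ x ∈ Set.uIcc (0:ℝ) c, HasDerivAt Real.sin (Real.cos x) x :=
      fun x _ => Real.hasDerivAt_sin x
    have hcont : ContinuousOn (fun x => Real.cos x ^ (a-1)) (Set.uIcc 0 c) := by
      refine ContinuousOn.rpow_const (Real.continuous_cos.continuousOn) ?_
      exact fun x hx => Or.inl (hcos x hx).ne'
    have hu'int : IntervalIntegrable (fun x => a * Real.cos x ^ (a-1) * (-Real.sin x))
        volume 0 c := by
      apply ContinuousOn.intervalIntegrable
      exact ((continuousOn_const.mul hcont).mul (Real.continuous_sin.continuousOn.neg))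
    have hv'int : IntervalIntegrable Real.cos volume 0 c :=
      Real.continuous_cos.intervalIntegrable _ _
    have ibp := intervalIntegral.integral_mul_deriv_eq_deriv_mul hu hv hu'int hv'int
    have e1 : (∫ θ in (0:ℝ)..c, Real.cos θ ^ (a+1))
        = ∫ x in (0:ℝ)..c, Real.cos x ^ a * Real.cos x := by
      refine intervalIntegral.integral_congr ?_
      intro x hx
      have h := hcos x hx
      show Real.cos x ^ (a+1) = Real.cos x ^ a * Real.cos x
      rw [← Real.rpow_add_one h.ne' a]
    have e2 : (∫ x in (0:ℝ)..c, a * Real.cos x ^ (a-1) * (-Real.sin x) * Real.sin x)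
        = -a * ∫ θ in (0:ℝ)..c, Real.sin θ^2 * Real.cos θ ^ (a-1) := by
      rw [← intervalIntegral.integral_const_mul]
      refine intervalIntegral.integral_congr ?_
      intro x _
      ring
    rw [e1, ibp, e2]
    simp only [Real.cos_zero, Real.sin_zero, mul_zero, sub_zero]
    ring
  -- Step B : take limits as c → π/2⁻
  have hlim1 : Tendsto (fun c => ∫ θ in (0:ℝ)..c, Real.cos θ ^ (a+1))
      (nhdsWithin (π/2) (Set.Iio (π/2))) (nhds I1) :=
    tendsto_primitive (cos_rpow_int (by linarith))
  have hlim2 : Tendsto (fun c => Real.cos c ^ a * Real.sin c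
        + a * ∫ θ in (0:ℝ)..c, Real.sin θ^2 * Real.cos θ ^ (a-1))
      (nhdsWithin (π/2) (Set.Iio (π/2))) (nhds (0 + a * Iss)) := by
    refine Tendsto.add ?_ ?_
    · have h1 : Tendsto (fun c => Real.cos c ^ a) (nhds (π/2)) (nhds 0) := by
        have hco : ContinuousAt (fun x : ℝ => x ^ a) (Real.cos (π/2)) := by
          rw [Real.cos_pi_div_two]
          exact Real.continuousAt_rpow_const 0 a (Or.inr ha.le)
        have := hco.comp Real.continuous_cos.continuousAt
        have h0 : Real.cos (π/2) ^ a = 0 := by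
          rw [Real.cos_pi_div_two, Real.zero_rpow ha.ne']
        rw [show (0:ℝ) = Real.cos (π/2) ^ a from h0.symm]
        exact this
      have h2 : Tendsto (fun c => Real.sin c) (nhds (π/2)) (nhds 1) := by
        rw [show (1:ℝ) = Real.sin (π/2) from (Real.sin_pi_div_two).symm]
        exact Real.continuous_sin.continuousAt
      have := (h1.mul h2).mono_left (nhdsWithin_le_nhds (s := Set.Iio (π/2)))
      simpa using this
    · exact (tendsto_primitive (sinsq_cos_int ha)).const_mul a
  have heq : I1 = 0 + a * Iss := by
    refine tendsto_nhds_unique ?_ hlim2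
    refine hlim1.congr' ?_
    filter_upwards [self_mem_nhdsWithin, Ioo_mem_nhdsLT (by positivity : (0:ℝ) < π/2)]
      with c hc1 hc2
    exact stepA c ⟨le_of_lt hc2.1, hc1⟩
  -- Step C : Iss = I0 - I1
  have hC : Iss = I0 - I1 := by
    have hsplit : Iss = ∫ θ in (0:ℝ)..(π/2),
        (Real.cos θ ^ (a-1) - Real.cos θ ^ (a+1)) := by
      refine intervalIntegral.integral_congr_ae ?_
      filter_upwards [ae_cos_ne] with θ hne hθ
      have h3 := uIoc_sub hθ
      have hc0 : 0 < Real.cos θ := lt_of_le_of_ne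
        (Real.cos_nonneg_of_mem_Icc ⟨by linarith [h3.1, Real.pi_pos], h3.2⟩) (Ne.symm hne)
      have hsq : Real.sin θ^2 = 1 - Real.cos θ^2 := by
        have := Real.sin_sq_add_cos_sq θ; linarith
      have hpow : Real.cos θ ^ (a+1) = Real.cos θ ^ (a-1) * Real.cos θ^2 := by
        rw [show a + 1 = (a-1) + 2 by ring, Real.rpow_add hc0, Real.rpow_two]
      rw [hsq, hpow]
      ring
    rw [hsplit, intervalIntegral.integral_sub (cos_rpow_int (by linarith))
      (cos_rpow_int (by linarith))]
  rw [hC] at heq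
  linear_combination heq
lemma cos_pos_of_ne {θ : ℝ} (hθ : θ ∈ Set.uIoc (0:ℝ) (π/2)) (hne : Real.cos θ ≠ 0) :
    0 < Real.cos θ := by
  have h3 := uIoc_sub hθ
  exact lt_of_le_of_ne
    (Real.cos_nonneg_of_mem_Icc ⟨by linarith [h3.1, Real.pi_pos], h3.2⟩) (Ne.symm hne)
lemma sqrt_disc_ge_cos {q θ : ℝ} (hq0 : 0 ≤ q) (hq1 : q ≤ 1) (hc : 0 ≤ Real.cos θ) :
    Real.cos θ ≤ Real.sqrt (1 - q^2 * Real.sin θ^2) := by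
  rw [show Real.cos θ = Real.sqrt (Real.cos θ^2) from (Real.sqrt_sq hc).symm]
  apply Real.sqrt_le_sqrt
  have h1 := Real.sin_sq_add_cos_sq θ
  have hq2 : q^2 ≤ 1 := by nlinarith
  have h2 := mul_le_mul_of_nonneg_right hq2 (sq_nonneg (Real.sin θ))
  linarith
lemma E_lim {a : ℝ} (ha : -1 < a) :
    Tendsto (fun q => ∫ θ in (0:ℝ)..(π/2),
        Real.sqrt (1 - q^2 * Real.sin θ^2) * Real.cos θ ^ a)
      (nhdsWithin 1 (Set.Iio 1)) (nhds (∫ θ in (0:ℝ)..(π/2), Real.cos θ ^ (a+1))) := by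
  have hint : ∀ᵐ θ : ℝ, θ ∈ Set.uIoc (0:ℝ) (π/2) →
      Tendsto (fun q : ℝ => Real.sqrt (1 - q^2 * Real.sin θ^2) * Real.cos θ ^ a)
        (nhdsWithin 1 (Set.Iio 1)) (nhds (Real.cos θ ^ (a+1))) := by
    filter_upwards [ae_cos_ne] with θ hne hθ
    have hcp := cos_pos_of_ne hθ hne
    have h1 : Tendsto (fun q : ℝ => Real.sqrt (1 - q^2 * Real.sin θ^2)) (nhds 1)
        (nhds (Real.sqrt (1 - 1^2 * Real.sin θ^2))) :=
      (Real.continuous_sqrt.comp (by continuity)).tendsto 1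
    have h2 : Real.sqrt (1 - 1^2 * Real.sin θ^2) = Real.cos θ := by
      rw [show (1:ℝ) - 1^2 * Real.sin θ^2 = Real.cos θ^2 by
        have := Real.sin_sq_add_cos_sq θ; nlinarith]
      exact Real.sqrt_sq hcp.le
    have h3 := (h1.mul (tendsto_const_nhds (x := Real.cos θ ^ a))).mono_left
      (nhdsWithin_le_nhds (s := Set.Iio 1))
    rw [h2] at h3
    have h4 : Real.cos θ * Real.cos θ ^ a = Real.cos θ ^ (a+1) := by
      rw [Real.rpow_add_one hcp.ne', mul_comm]
    rwa [h4] at h3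
  refine intervalIntegral.tendsto_integral_filter_of_dominated_convergence
    (fun θ => Real.cos θ ^ a) ?_ ?_ (cos_rpow_int ha) hint
  · filter_upwards with q
    exact (aesm_sqrt_disc q _).mul (aesm_cos_rpow a _ measurableSet_uIoc uIoc_sub)
  · filter_upwards with q
    filter_upwards with θ hθ
    have h3 := uIoc_sub hθ
    have hc0 : 0 ≤ Real.cos θ := Real.cos_nonneg_of_mem_Icc ⟨by linarith [h3.1, Real.pi_pos], h3.2⟩
    have hrn : 0 ≤ Real.cos θ ^ a := Real.rpow_nonneg hc0 _
    have hsq : Real.sqrt (1 - q^2 * Real.sin θ^2) ≤ 1 := by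
      have h := Real.sqrt_le_sqrt (show 1 - q^2 * Real.sin θ^2 ≤ 1 by nlinarith [sq_nonneg (q * Real.sin θ)])
      simpa using h
    simp only [Real.norm_eq_abs]
    rw [abs_of_nonneg (mul_nonneg (Real.sqrt_nonneg _) hrn)]
    nlinarith [Real.sqrt_nonneg (1 - q^2 * Real.sin θ^2)]
lemma K_lim {p : ℝ} (hp2 : 2 < p) :
    Tendsto (fun q => ∫ θ in (0:ℝ)..(π/2),
        Real.cos θ ^ (1 - 2/p) / Real.sqrt (1 - q^2 * Real.sin θ^2))
      (nhdsWithin 1 (Set.Iio 1)) (nhds (∫ θ in (0:ℝ)..(π/2), Real.cos θ ^ (1 - 2/p - 1))) := by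
  have ha : 0 < 1 - 2/p := by
    have : 2/p < 1 := by rw [div_lt_one (by linarith)]; linarith
    linarith
  have hint : ∀ᵐ θ : ℝ, θ ∈ Set.uIoc (0:ℝ) (π/2) →
      Tendsto (fun q : ℝ => Real.cos θ ^ (1 - 2/p) / Real.sqrt (1 - q^2 * Real.sin θ^2))
        (nhdsWithin 1 (Set.Iio 1)) (nhds (Real.cos θ ^ (1 - 2/p - 1))) := by
    filter_upwards [ae_cos_ne] with θ hne hθ
    have hcp := cos_pos_of_ne hθ hne
    have h1 : Tendsto (fun q : ℝ => Real.sqrt (1 - q^2 * Real.sin θ^2)) (nhds 1)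
        (nhds (Real.sqrt (1 - 1^2 * Real.sin θ^2))) :=
      (Real.continuous_sqrt.comp (by continuity)).tendsto 1
    have h2 : Real.sqrt (1 - 1^2 * Real.sin θ^2) = Real.cos θ := by
      rw [show (1:ℝ) - 1^2 * Real.sin θ^2 = Real.cos θ^2 by
        have := Real.sin_sq_add_cos_sq θ; nlinarith]
      exact Real.sqrt_sq hcp.le
    rw [h2] at h1
    have h3 := (tendsto_const_nhds (x := Real.cos θ ^ (1 - 2/p))).div h1 hcp.ne'
    have h4 : Real.cos θ ^ (1 - 2/p) / Real.cos θ = Real.cos θ ^ (1 - 2/p - 1) := by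
      rw [Real.rpow_sub_one hcp.ne']
    rw [h4] at h3
    exact h3.mono_left (nhdsWithin_le_nhds (s := Set.Iio 1))
  refine intervalIntegral.tendsto_integral_filter_of_dominated_convergence
    (fun θ => Real.cos θ ^ (1 - 2/p - 1)) ?_ ?_ (cos_rpow_int (by linarith)) hint
  · filter_upwards with q
    exact aesm_K p q
  · have hmem : Set.Ioo (0:ℝ) 1 ∈ nhdsWithin (1:ℝ) (Set.Iio 1) :=
      Ioo_mem_nhdsLT one_pos
    filter_upwards [hmem] with q hq
    filter_upwards [ae_cos_ne] with θ hne hθ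
    have hcp := cos_pos_of_ne hθ hne
    have hs := sqrt_disc_ge_cos hq.1.le hq.2.le hcp.le
    have hrn : 0 ≤ Real.cos θ ^ (1 - 2/p) := Real.rpow_nonneg hcp.le _
    have hd : 0 < Real.sqrt (1 - q^2 * Real.sin θ^2) := lt_of_lt_of_le hcp hs
    simp only [Real.norm_eq_abs]
    rw [abs_of_nonneg (div_nonneg hrn hd.le)]
    rw [Real.rpow_sub_one hcp.ne']
    exact div_le_div_of_nonneg_left hrn hcp hs
lemma log_integral {c : ℝ} (hc0 : 0 ≤ c) (hc : c < π/2) :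
    ∫ θ in (0:ℝ)..c, (π/2 - θ)⁻¹ = Real.log (π/2) - Real.log (π/2 - c) := by
  have hderiv : ∀ θ ∈ Set.uIcc (0:ℝ) c,
      HasDerivAt (fun x => -Real.log (π/2 - x)) ((π/2 - θ)⁻¹) θ := by
    intro θ hθ
    rw [Set.uIcc_of_le hc0] at hθ
    have hne : π/2 - θ > 0 := by linarith [hθ.2]
    have h1 : HasDerivAt (fun x : ℝ => π/2 - x) (-1) θ := by
      simpa using (hasDerivAt_id θ).const_sub (π/2)
    have h2 := (Real.hasDerivAt_log hne.ne').comp θ h1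
    have h3 := h2.neg
    exact h3.congr_deriv (by ring)
  have hint : IntervalIntegrable (fun θ => (π/2 - θ)⁻¹) volume 0 c := by
    apply ContinuousOn.intervalIntegrable
    apply ContinuousOn.inv₀
    · exact (continuousOn_const.sub continuousOn_id)
    · intro x hx
      rw [Set.uIcc_of_le hc0] at hx
      have : x ≤ c := hx.2
      intro h0
      have : π/2 - x > 0 := by linarith
      linarith [h0 ▸ this]
  have := intervalIntegral.integral_eq_sub_of_hasDerivAt hderiv hint
  rw [this]
  simp
  ring
lemma K_pointwise_lower {p q θ : ℝ} (hp : 1 < p) (hp2 : p ≤ 2) (hq : q ∈ Set.Ioo (0:ℝ) 1)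
    (hθ : θ ∈ Set.Icc (0:ℝ) (Real.arccos (Real.sqrt (1 - q)))) :
    (1/2) * (π/2 - θ)⁻¹ ≤ Real.cos θ ^ (1 - 2/p) / Real.sqrt (1 - q^2 * Real.sin θ^2) := by
  have hq1 : (0:ℝ) < 1 - q := by linarith [hq.2]
  have hsq : Real.sqrt (1 - q) ≤ 1 := by
    have h := Real.sqrt_le_sqrt (show 1 - q ≤ 1 by linarith [hq.1])
    simpa using h
  have hsq0 : 0 < Real.sqrt (1 - q) := Real.sqrt_pos.mpr hq1
  -- cos θ ≥ sqrt(1-q)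
  have harc : Real.cos (Real.arccos (Real.sqrt (1 - q))) = Real.sqrt (1 - q) :=
    Real.cos_arccos (by linarith) hsq
  have hcb : Real.sqrt (1 - q) ≤ Real.cos θ := by
    rw [← harc]
    exact Real.cos_le_cos_of_nonneg_of_le_pi hθ.1 (Real.arccos_le_pi _) hθ.2
  have hcp : 0 < Real.cos θ := lt_of_lt_of_le hsq0 hcb
  have hθπ : θ < π/2 := by
    rcases lt_or_ge θ (π/2) with h | h
    · exact h
    · exfalso
      have : Real.cos θ ≤ 0 := by
        rcases eq_or_lt_of_le h with rfl | hlt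
        · simp
        · have := Real.cos_nonpos_of_pi_div_two_le_of_le h (by
            linarith [hθ.2, Real.arccos_le_pi (Real.sqrt (1 - q)), Real.pi_pos])
          exact this
      linarith
  have hθ0 : 0 ≤ θ := hθ.1
  have hcos1 : Real.cos θ ≤ 1 := Real.cos_le_one θ
  -- cos² θ ≥ 1 - q
  have hc2 : 1 - q ≤ Real.cos θ^2 := by
    have := Real.sq_sqrt hq1.le
    nlinarith
  -- 1 - q² sin² ≤ 4 cos²
  have hsin2 : Real.sin θ^2 = 1 - Real.cos θ^2 := by
    have := Real.sin_sq_add_cos_sq θ; linarith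
  have hd4 : 1 - q^2 * Real.sin θ^2 ≤ 4 * Real.cos θ^2 := by
    nlinarith [sq_nonneg (Real.sin θ), hq.1, hq.2, sq_nonneg (1 - q)]
  have hsd : Real.sqrt (1 - q^2 * Real.sin θ^2) ≤ 2 * Real.cos θ := by
    have h1 := Real.sqrt_le_sqrt hd4
    have h2 : Real.sqrt (4 * Real.cos θ^2) = 2 * Real.cos θ := by
      rw [show 4 * Real.cos θ^2 = (2 * Real.cos θ)^2 by ring]
      exact Real.sqrt_sq (by linarith)
    linarith [h1, h2.le, h2.ge]
  have hsdpos : 0 < Real.sqrt (1 - q^2 * Real.sin θ^2) ∨ True := Or.inr trivial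
  -- integrand ≥ cos^(a-1)/2
  have hrn : 0 < Real.cos θ ^ (1 - 2/p) := Real.rpow_pos_of_pos hcp _
  have step1 : Real.cos θ ^ (1 - 2/p) / (2 * Real.cos θ)
      ≤ Real.cos θ ^ (1 - 2/p) / Real.sqrt (1 - q^2 * Real.sin θ^2) := by
    apply div_le_div_of_nonneg_left hrn.le ?_ hsd
    have : (0:ℝ) < 1 - q^2 * Real.sin θ^2 := by nlinarith [Real.sin_sq_le_one θ]
    exact Real.sqrt_pos.mpr this
  have step2 : Real.cos θ ^ (1 - 2/p) / (2 * Real.cos θ)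
      = Real.cos θ ^ (1 - 2/p - 1) / 2 := by
    rw [Real.rpow_sub_one hcp.ne']
    ring
  have step3 : Real.cos θ ^ (-1 : ℝ) ≤ Real.cos θ ^ (1 - 2/p - 1) := by
    apply Real.rpow_le_rpow_of_exponent_ge hcp hcos1
    have h2p : 1 ≤ 2/p := by
      rw [le_div_iff₀ (by linarith)]; linarith
    linarith
  have step4 : (π/2 - θ)⁻¹ ≤ Real.cos θ ^ (-1 : ℝ) := by
    rw [Real.rpow_neg_one]
    exact inv_anti₀ hcp (cos_upper θ hθ0 (by linarith))
  calc (1/2) * (π/2 - θ)⁻¹ ≤ (1/2) * Real.cos θ ^ (-1:ℝ) := by linarith [step4]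
    _ ≤ Real.cos θ ^ (1 - 2/p - 1) / 2 := by linarith [step3]
    _ = Real.cos θ ^ (1 - 2/p) / (2 * Real.cos θ) := step2.symm
    _ ≤ _ := step1
lemma K_atTop {p : ℝ} (hp : 1 < p) (hp2 : p ≤ 2) :
    Tendsto (fun q => ∫ θ in (0:ℝ)..(π/2),
        Real.cos θ ^ (1 - 2/p) / Real.sqrt (1 - q^2 * Real.sin θ^2))
      (nhdsWithin 1 (Set.Iio 1)) atTop := by
  set L : ℝ → ℝ := fun q =>
    (1/2) * (Real.log (π/2) - Real.log (π/2 - Real.arccos (Real.sqrt (1 - q)))) with hL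
  have hLK : ∀ q ∈ Set.Ioo (0:ℝ) 1, L q ≤ ∫ θ in (0:ℝ)..(π/2),
      Real.cos θ ^ (1 - 2/p) / Real.sqrt (1 - q^2 * Real.sin θ^2) := by
    intro q hq
    set c := Real.arccos (Real.sqrt (1 - q)) with hc
    have hc0 : 0 ≤ c := Real.arccos_nonneg _
    have hcπ : c < π/2 := Real.arccos_lt_pi_div_two.mpr (Real.sqrt_pos.mpr (by linarith [hq.2]))
    have hint1 : IntervalIntegrable
        (fun θ => Real.cos θ ^ (1 - 2/p) / Real.sqrt (1 - q^2 * Real.sin θ^2)) volume 0 c := by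
      refine (K_int hp hq.1.le hq.2).mono_set' ?_
      rw [Set.uIoc_of_le hc0, Set.uIoc_of_le (by positivity : (0:ℝ) ≤ π/2)]
      exact Set.Ioc_subset_Ioc_right hcπ.le
    have hint2 : IntervalIntegrable
        (fun θ => Real.cos θ ^ (1 - 2/p) / Real.sqrt (1 - q^2 * Real.sin θ^2)) volume c (π/2) := by
      refine (K_int hp hq.1.le hq.2).mono_set' ?_
      rw [Set.uIoc_of_le hcπ.le, Set.uIoc_of_le (by positivity : (0:ℝ) ≤ π/2)]
      exact Set.Ioc_subset_Ioc_left hc0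
    have hlow_int : IntervalIntegrable (fun θ => (1/2) * (π/2 - θ)⁻¹) volume 0 c := by
      apply ContinuousOn.intervalIntegrable
      refine continuousOn_const.mul (ContinuousOn.inv₀
        (continuousOn_const.sub continuousOn_id) ?_)
      intro x hx
      rw [Set.uIcc_of_le hc0] at hx
      have : x ≤ c := hx.2
      exact ne_of_gt (by linarith)
    have hmono : (∫ θ in (0:ℝ)..c, (1/2) * (π/2 - θ)⁻¹)
        ≤ ∫ θ in (0:ℝ)..c, Real.cos θ ^ (1 - 2/p) / Real.sqrt (1 - q^2 * Real.sin θ^2) := by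
      refine intervalIntegral.integral_mono_on hc0 hlow_int hint1 ?_
      intro θ hθ
      exact K_pointwise_lower hp hp2 hq ⟨hθ.1, hθ.2⟩
    have hval : (∫ θ in (0:ℝ)..c, (1/2) * (π/2 - θ)⁻¹) = L q := by
      rw [intervalIntegral.integral_const_mul, log_integral hc0 hcπ]
    have htail : 0 ≤ ∫ θ in c..(π/2),
        Real.cos θ ^ (1 - 2/p) / Real.sqrt (1 - q^2 * Real.sin θ^2) := by
      refine intervalIntegral.integral_nonneg hcπ.le ?_
      intro u hu
      have hcn : 0 ≤ Real.cos u :=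
        Real.cos_nonneg_of_mem_Icc ⟨by linarith [hu.1, Real.pi_pos], hu.2⟩
      exact div_nonneg (Real.rpow_nonneg hcn _) (Real.sqrt_nonneg _)
    have hsplit := intervalIntegral.integral_add_adjacent_intervals hint1 hint2
    rw [← hsplit]
    linarith [hmono, hval.ge, hval.le, htail]
  have hLtop : Tendsto L (nhdsWithin 1 (Set.Iio 1)) atTop := by
    have h1 : Tendsto (fun q : ℝ => π/2 - Real.arccos (Real.sqrt (1 - q)))
        (nhdsWithin 1 (Set.Iio 1)) (nhdsWithin 0 (Set.Ioi 0)) := by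
      rw [tendsto_nhdsWithin_iff]
      constructor
      · have hcont : Continuous fun q : ℝ => π/2 - Real.arccos (Real.sqrt (1 - q)) := by
          exact continuous_const.sub
            (Real.continuous_arccos.comp (Real.continuous_sqrt.comp (by continuity)))
        have := (hcont.tendsto 1).mono_left (nhdsWithin_le_nhds (s := Set.Iio 1))
        simpa using this
      · filter_upwards [self_mem_nhdsWithin] with q hq
        have : Real.arccos (Real.sqrt (1 - q)) < π/2 :=
          Real.arccos_lt_pi_div_two.mpr (Real.sqrt_pos.mpr (by simp at hq; linarith))
        simpa using this
    have h2 : Tendsto (fun q : ℝ => Real.log (π/2 - Real.arccos (Real.sqrt (1 - q))))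
        (nhdsWithin 1 (Set.Iio 1)) atBot :=
      Real.tendsto_log_nhdsGT_zero.comp h1
    have h3 : Tendsto (fun q : ℝ =>
        Real.log (π/2) + -Real.log (π/2 - Real.arccos (Real.sqrt (1 - q))))
        (nhdsWithin 1 (Set.Iio 1)) atTop :=
      tendsto_atTop_add_const_left _ _ (tendsto_neg_atBot_atTop.comp h2)
    have h4 := h3.const_mul_atTop (show (0:ℝ) < 1/2 by norm_num)
    refine h4.congr ?_
    intro q
    simp [hL]
    ring
  refine tendsto_atTop_mono' _ ?_ hLtop
  filter_upwards [Ioo_mem_nhdsLT one_pos] with q hq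
  exact hLK q hq

theorem Qp_strictAnti_and_limits (p : ℝ) (hp : 1 < p) :
    StrictAntiOn (Qp p) (Set.Ico (0:ℝ) 1) ∧ Qp p 0 = 1 ∧
    (p ≤ 2 → Tendsto (Qp p) (nhdsWithin 1 (Set.Iio 1)) (nhds (-1))) ∧
    (2 < p → Tendsto (Qp p) (nhdsWithin 1 (Set.Iio 1)) (nhds (-(1 / (p - 1))))) := by
  refine ⟨Qp_anti hp, Qp_zero hp, ?_, ?_⟩
  · -- p ≤ 2
    intro hp2
    set I1 := ∫ θ in (0:ℝ)..(π/2), Real.cos θ ^ (1 - 2/p + 1) with hI1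
    have hE : Tendsto (fun q => E1 p q) (nhdsWithin 1 (Set.Iio 1)) (nhds I1) := E_lim (ha_of_hp hp)
    have hK : Tendsto (fun q => K1 p q) (nhdsWithin 1 (Set.Iio 1)) atTop := K_atTop hp hp2
    have h5 : Tendsto (fun q => 2 * E1 p q * (K1 p q)⁻¹ - 1) (nhdsWithin 1 (Set.Iio 1))
        (nhds (2 * I1 * 0 - 1)) :=
      (((tendsto_const_nhds (x := (2:ℝ))).mul hE).mul hK.inv_tendsto_atTop).sub tendsto_const_nhds
    rw [show (2:ℝ) * I1 * 0 - 1 = -1 by ring] at h5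
    refine h5.congr fun q => ?_
    rw [Qp, div_eq_mul_inv]
  · -- 2 < p
    intro hp2
    set I1 := ∫ θ in (0:ℝ)..(π/2), Real.cos θ ^ (1 - 2/p + 1) with hI1
    set I0 := ∫ θ in (0:ℝ)..(π/2), Real.cos θ ^ (1 - 2/p - 1) with hI0
    have ha : 0 < 1 - 2/p := by
      have : 2/p < 1 := by rw [div_lt_one (by linarith)]; linarith
      linarith
    have ha1 : 1 - 2/p < 1 := by
      have : 0 < 2/p := by positivity
      linarith
    have hI0pos : 0 < I0 := by
      refine intervalIntegral_pos_of_pos_on (cos_rpow_int (by linarith)) (fun θ hθ => ?_)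
        (by positivity)
      exact Real.rpow_pos_of_pos (cos_pos_Ioo hθ) _
    have hE : Tendsto (fun q => E1 p q) (nhdsWithin 1 (Set.Iio 1)) (nhds I1) := E_lim (ha_of_hp hp)
    have hK : Tendsto (fun q => K1 p q) (nhdsWithin 1 (Set.Iio 1)) (nhds I0) := K_lim hp2
    have h5 : Tendsto (fun q => 2 * E1 p q / K1 p q - 1) (nhdsWithin 1 (Set.Iio 1))
        (nhds (2 * I1 / I0 - 1)) :=
      (((tendsto_const_nhds (x := (2:ℝ))).mul hE).div hK hI0pos.ne').sub tendsto_const_nhds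
    have hval : 2 * I1 / I0 - 1 = -(1 / (p - 1)) := by
      have hb := beta_rec ha ha1
      have hp0 : p ≠ 0 := by linarith
      have hp1 : p - 1 ≠ 0 := by intro h; nlinarith
      have e1 : p * (1 + (1 - 2/p)) = 2*p - 2 := by field_simp; ring
      have e2 : p * (1 - 2/p) = p - 2 := by field_simp
      have key : 2 * I1 * (p - 1) = (p - 2) * I0 := by
        linear_combination p * hb - I1 * e1 + I0 * e2
      have h6 : 2 * I1 / I0 = (p - 2)/(p - 1) := by
        rw [div_eq_div_iff hI0pos.ne' hp1]
        linear_combination key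
      rw [h6]
      field_simp
      ring
    rw [hval] at h5
    exact h5.congr fun q => rfl
end

section
/- For each p ∈ (1, ∞), there exists a unique q* ∈ (0, 1) such that 2E_{1,p}(q*) = K_{1,p}(q*); moreover 1/√2 < q* < 1. -/
open Real

open Real MeasureTheory intervalIntegral Set

namespace QstarAux


noncomputable def J (s : ℝ) : ℝ := ∫ θ in (0:ℝ)..(π/2), Real.cos θ ^ s

noncomputable def hfun (s q θ : ℝ) : ℝ :=
  2 * (Real.sqrt (1 - q ^ 2 * Real.sin θ ^ 2) * Real.cos θ ^ s)
    - Real.cos θ ^ s / Real.sqrt (1 - q ^ 2 * Real.sin θ ^ 2)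

noncomputable def F (s q : ℝ) : ℝ := ∫ θ in (0:ℝ)..(π/2), hfun s q θ

lemma w_le_one (q θ : ℝ) : 1 - q^2 * Real.sin θ^2 ≤ 1 := by nlinarith [sq_nonneg (q * Real.sin θ), sq_nonneg q, sq_nonneg (Real.sin θ)]

lemma w_ge (q θ : ℝ) : 1 - q^2 ≤ 1 - q^2 * Real.sin θ^2 := by
  nlinarith [Real.sin_sq_le_one θ, sq_nonneg q]

lemma w_ge_cos_sq {q : ℝ} (hq : q^2 ≤ 1) (θ : ℝ) :
    Real.cos θ ^ 2 ≤ 1 - q^2 * Real.sin θ^2 := by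
  have h1 := Real.sin_sq_add_cos_sq θ
  nlinarith [sq_nonneg (Real.sin θ)]

lemma ae_ne_pi_div_two : ∀ᵐ θ : ℝ ∂volume, θ ≠ π / 2 := by
  rw [MeasureTheory.ae_iff]
  simp only [not_not, setOf_eq_eq_singleton]
  exact Real.volume_singleton

lemma cos_lb {θ : ℝ} (h0 : 0 ≤ θ) (h1 : θ ≤ π/2) : 2/π * (π/2 - θ) ≤ Real.cos θ := by
  have := Real.mul_le_sin (x := π/2 - θ) (by linarith) (by linarith)
  rwa [Real.sin_pi_div_two_sub] at this

lemma cos_ub {θ : ℝ} (h1 : θ ≤ π/2) : Real.cos θ ≤ π/2 - θ := by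
  have := Real.sin_le (x := π/2 - θ) (by linarith)
  rwa [Real.sin_pi_div_two_sub] at this

lemma intervalIntegrable_cos_rpow {s : ℝ} (hs : -1 < s) :
    IntervalIntegrable (fun θ => Real.cos θ ^ s) volume 0 (π/2) := by
  have hpi := Real.pi_pos
  have hmeas : AEStronglyMeasurable (fun θ => Real.cos θ ^ s)
      (volume.restrict (Set.uIoc (0:ℝ) (π/2))) := by
    apply Measurable.aestronglyMeasurable; fun_prop
  have hI : Set.uIoc (0:ℝ) (π/2) = Ioc 0 (π/2) := uIoc_of_le (by positivity)
  rcases le_or_gt 0 s with h0 | h0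
  · apply (_root_.intervalIntegrable_const (c := (1:ℝ))).mono_fun' hmeas
    rw [hI]
    refine (ae_restrict_iff' measurableSet_Ioc).2 (Filter.Eventually.of_forall fun θ hθ => ?_)
    have hc : 0 ≤ Real.cos θ := Real.cos_nonneg_of_mem_Icc ⟨by linarith [hθ.1], hθ.2⟩
    simp only [Real.norm_eq_abs]
    rw [abs_of_nonneg (Real.rpow_nonneg hc s)]
    calc Real.cos θ ^ s ≤ 1 ^ s := Real.rpow_le_rpow hc (Real.cos_le_one θ) h0
      _ = 1 := Real.one_rpow s
  · have hbound : IntervalIntegrable (fun θ => (2/π)^s * (π/2 - θ)^s) volume 0 (π/2) := by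
      have h1 : IntervalIntegrable (fun x : ℝ => x ^ s) volume 0 (π/2) :=
        intervalIntegral.intervalIntegrable_rpow' hs
      have h2 := (h1.comp_sub_left (π/2)).const_mul ((2/π)^s)
      simpa using h2.symm
    apply hbound.mono_fun' hmeas
    rw [hI]
    refine (ae_restrict_iff' measurableSet_Ioc).2 (Filter.Eventually.of_forall fun θ hθ => ?_)
    have hθ1 : (0:ℝ) ≤ θ := le_of_lt hθ.1
    have hc0 : 0 ≤ Real.cos θ := Real.cos_nonneg_of_mem_Icc ⟨by linarith, hθ.2⟩
    simp only [Real.norm_eq_abs]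
    rw [abs_of_nonneg (Real.rpow_nonneg hc0 s)]
    rcases eq_or_lt_of_le hθ.2 with he | hlt
    · rw [he, Real.cos_pi_div_two, Real.zero_rpow h0.ne, sub_self, Real.zero_rpow h0.ne, mul_zero]
    · have hlbpos : 0 < 2/π * (π/2 - θ) := by
        have : 0 < π/2 - θ := by linarith
        positivity
      calc Real.cos θ ^ s ≤ (2/π * (π/2-θ))^s :=
            Real.rpow_le_rpow_of_nonpos hlbpos (cos_lb hθ1 hθ.2) h0.le
        _ = (2/π)^s * (π/2-θ)^s := Real.mul_rpow (by positivity) (by linarith)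

lemma intervalIntegrable_cos_rpow_mul {s : ℝ} (hs : -1 < s) {b : ℝ → ℝ} {C : ℝ}
    (hbm : Measurable b) (hb : ∀ θ ∈ Ioc 0 (π/2), |b θ| ≤ C) :
    IntervalIntegrable (fun θ => Real.cos θ ^ s * b θ) volume 0 (π/2) := by
  have hpi := Real.pi_pos
  have hI : Set.uIoc (0:ℝ) (π/2) = Ioc 0 (π/2) := uIoc_of_le (by positivity)
  apply ((intervalIntegrable_cos_rpow hs).const_mul C).mono_fun'
  · apply Measurable.aestronglyMeasurable; fun_prop
  · rw [hI]
    refine (ae_restrict_iff' measurableSet_Ioc).2 (Filter.Eventually.of_forall fun θ hθ => ?_)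
    have hc0 : 0 ≤ Real.cos θ := Real.cos_nonneg_of_mem_Icc ⟨by linarith [hθ.1], hθ.2⟩
    have h1 : 0 ≤ Real.cos θ ^ s := Real.rpow_nonneg hc0 s
    simp only [Real.norm_eq_abs]
    rw [abs_mul, abs_of_nonneg h1]
    calc Real.cos θ^s * |b θ| ≤ Real.cos θ^s * C := mul_le_mul_of_nonneg_left (hb θ hθ) h1
      _ = C * Real.cos θ^s := mul_comm _ _

lemma intgE {s : ℝ} (hs : -1 < s) (q : ℝ) :
    IntervalIntegrable
      (fun θ => Real.sqrt (1 - q^2 * Real.sin θ^2) * Real.cos θ^s) volume 0 (π/2) := by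
  have := intervalIntegrable_cos_rpow_mul hs
      (b := fun θ => Real.sqrt (1 - q^2 * Real.sin θ^2)) (C := 1) (by fun_prop)
      (fun θ _ => by
        rw [abs_of_nonneg (Real.sqrt_nonneg _)]
        exact Real.sqrt_le_one.2 (w_le_one q θ))
  simpa [mul_comm] using this

lemma intgK {s : ℝ} (hs : -1 < s) {q : ℝ} (hq : q^2 < 1) :
    IntervalIntegrable
      (fun θ => Real.cos θ^s / Real.sqrt (1 - q^2 * Real.sin θ^2)) volume 0 (π/2) := by
  have h0 : (0:ℝ) < 1 - q^2 := by linarith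
  have := intervalIntegrable_cos_rpow_mul hs
      (b := fun θ => (Real.sqrt (1 - q^2 * Real.sin θ^2))⁻¹)
      (C := (Real.sqrt (1-q^2))⁻¹) (by fun_prop)
      (fun θ _ => by
        have h1 : 0 < Real.sqrt (1 - q^2) := Real.sqrt_pos.2 h0
        have h2 : Real.sqrt (1-q^2) ≤ Real.sqrt (1 - q^2 * Real.sin θ^2) :=
          Real.sqrt_le_sqrt (w_ge q θ)
        rw [abs_of_nonneg (inv_nonneg.2 (Real.sqrt_nonneg _))]
        exact inv_anti₀ h1 h2)
  simpa [div_eq_mul_inv] using this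

lemma intgH {s : ℝ} (hs : -1 < s) {q : ℝ} (hq : q^2 < 1) :
    IntervalIntegrable (hfun s q) volume 0 (π/2) := by
  unfold hfun
  exact ((intgE hs q).const_mul 2).sub (intgK hs hq)

lemma J_pos {t : ℝ} (ht : -1 < t) : 0 < J t := by
  have hpi := Real.pi_pos
  apply intervalIntegral.intervalIntegral_pos_of_pos_on (intervalIntegrable_cos_rpow ht)
    ?_ (by positivity)
  intro θ hθ
  exact Real.rpow_pos_of_pos (Real.cos_pos_of_mem_Ioo ⟨by linarith [hθ.1], hθ.2⟩) t



lemma F_eq_sub {p q s : ℝ} (hsp : s = 1 - 2/p) (hs : -1 < s) (hq : q^2 < 1) :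
    F s q = 2 * E1 p q - K1 p q := by
  have hE := intgE hs (q := q) (s := s)
  have hK := intgK hs (q := q) (s := s) hq
  subst hsp
  unfold F hfun E1 K1
  rw [← intervalIntegral.integral_const_mul, ← intervalIntegral.integral_sub (hE.const_mul 2) hK]

lemma phi_pos {c w : ℝ} (hc : 0 < c) (hw : 1/2 < w) :
    0 < 2 * (Real.sqrt w * c) - c / Real.sqrt w := by
  have hwpos : 0 < w := by linarith
  have hsw : 0 < Real.sqrt w := Real.sqrt_pos.2 hwpos
  have hsq : Real.sqrt w * Real.sqrt w = w := Real.mul_self_sqrt hwpos.le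
  rw [sub_pos, div_lt_iff₀ hsw]
  nlinarith

lemma phi_mono {c w1 w2 : ℝ} (hc : 0 < c) (h2 : 0 < w2) (h21 : w2 < w1) :
    2 * (Real.sqrt w2 * c) - c / Real.sqrt w2 < 2 * (Real.sqrt w1 * c) - c / Real.sqrt w1 := by
  have hs2 : Real.sqrt w2 < Real.sqrt w1 := Real.sqrt_lt_sqrt h2.le h21
  have hs2pos : 0 < Real.sqrt w2 := Real.sqrt_pos.2 h2
  have hdiv : c / Real.sqrt w1 < c / Real.sqrt w2 := div_lt_div_of_pos_left hc hs2pos hs2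
  nlinarith

lemma F_pos_at_sqrt2 {s : ℝ} (hs : -1 < s) : 0 < F s (1 / Real.sqrt 2) := by
  have hpi := Real.pi_pos
  have hq2 : (1 / Real.sqrt 2 : ℝ)^2 = 1/2 := by
    rw [div_pow, one_pow, Real.sq_sqrt (by norm_num : (0:ℝ) ≤ 2)]
  apply intervalIntegral.intervalIntegral_pos_of_pos_on
      (intgH hs (by rw [hq2]; norm_num)) ?_ (by positivity)
  intro θ hθ
  obtain ⟨hθ1, hθ2⟩ := hθ
  have hc : 0 < Real.cos θ := Real.cos_pos_of_mem_Ioo ⟨by linarith, hθ2⟩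
  have hcs : 0 < Real.cos θ ^ s := Real.rpow_pos_of_pos hc s
  have hsin2 : Real.sin θ^2 < 1 := by
    nlinarith [Real.sin_sq_add_cos_sq θ, mul_pos hc hc]
  have hwgt : 1/2 < 1 - (1 / Real.sqrt 2 : ℝ)^2 * Real.sin θ^2 := by
    rw [hq2]; nlinarith
  exact phi_pos hcs hwgt

lemma F_strict_anti {s q1 q2 : ℝ} (hs : -1 < s) (h0 : 0 < q1) (h12 : q1 < q2) (h2 : q2 < 1) :
    F s q2 < F s q1 := by
  have hpi := Real.pi_pos
  have hq1 : q1^2 < 1 := by nlinarith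
  have hq2 : q2^2 < 1 := by nlinarith
  have key : 0 < F s q1 - F s q2 := by
    unfold F
    rw [← intervalIntegral.integral_sub (intgH hs hq1) (intgH hs hq2)]
    apply intervalIntegral.intervalIntegral_pos_of_pos_on
        ((intgH hs hq1).sub (intgH hs hq2)) ?_ (by positivity)
    intro θ hθ
    obtain ⟨hθ1, hθ2⟩ := hθ
    have hc : 0 < Real.cos θ := Real.cos_pos_of_mem_Ioo ⟨by linarith, hθ2⟩
    have hcs : 0 < Real.cos θ ^ s := Real.rpow_pos_of_pos hc s
    have hsin0 : 0 < Real.sin θ := Real.sin_pos_of_pos_of_lt_pi hθ1 (by linarith)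
    have hq12 : q1^2 < q2^2 := by nlinarith
    have hw21 : 1 - q2^2 * Real.sin θ^2 < 1 - q1^2 * Real.sin θ^2 := by
      nlinarith [mul_pos (sub_pos.2 hq12) (mul_pos hsin0 hsin0)]
    have hw2pos : 0 < 1 - q2^2 * Real.sin θ^2 := by
      have := w_ge q2 θ
      nlinarith
    rw [sub_pos]
    unfold hfun
    exact phi_mono hcs hw2pos hw21
  linarith

lemma F_contOn {s a b : ℝ} (ha : 0 ≤ a) (hab : a ≤ b) (hb : b ≤ 1)
    {bnd : ℝ → ℝ} (hbnd : IntervalIntegrable bnd volume 0 (π/2))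
    (hdom : ∀ q ∈ Icc a b, ∀ θ ∈ Ioo 0 (π/2), |hfun s q θ| ≤ bnd θ) :
    ContinuousOn (F s) (Icc a b) := by
  have hpi := Real.pi_pos
  have hI : Set.uIoc (0:ℝ) (π/2) = Ioc 0 (π/2) := uIoc_of_le (by positivity)
  intro q₀ hq₀
  apply intervalIntegral.continuousWithinAt_of_dominated_interval (bound := bnd)
  · filter_upwards [self_mem_nhdsWithin] with q _
    apply Measurable.aestronglyMeasurable
    unfold hfun; fun_prop
  · filter_upwards [self_mem_nhdsWithin] with q hq
    filter_upwards [ae_ne_pi_div_two] with θ hne hθ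
    rw [hI] at hθ
    rw [Real.norm_eq_abs]
    exact hdom q hq θ ⟨hθ.1, lt_of_le_of_ne hθ.2 hne⟩
  · exact hbnd
  · filter_upwards [ae_ne_pi_div_two] with θ hne hθ
    rw [hI] at hθ
    have hθ' : θ ∈ Ioo 0 (π/2) := ⟨hθ.1, lt_of_le_of_ne hθ.2 hne⟩
    apply ContinuousAt.continuousWithinAt
    have hc : 0 < Real.cos θ := Real.cos_pos_of_mem_Ioo ⟨by linarith [hθ'.1], hθ'.2⟩
    have hq01 : q₀^2 ≤ 1 := by
      have h1 : 0 ≤ q₀ := le_trans ha hq₀.1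
      have h2 : q₀ ≤ 1 := le_trans hq₀.2 hb
      nlinarith
    have hw0 : 0 < 1 - q₀^2 * Real.sin θ^2 :=
      lt_of_lt_of_le (by positivity) (w_ge_cos_sq hq01 θ)
    have hsq : Real.sqrt (1 - q₀^2 * Real.sin θ^2) ≠ 0 := (Real.sqrt_pos.2 hw0).ne'
    have hc1 : Continuous fun q : ℝ => Real.sqrt (1 - q^2 * Real.sin θ^2) := by fun_prop
    unfold hfun
    exact ((continuous_const.mul (hc1.mul continuous_const)).continuousAt).sub
      (ContinuousAt.div continuousAt_const hc1.continuousAt hsq)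



lemma intg_aff {s : ℝ} (hs : -1 < s) :
    IntervalIntegrable (fun θ => (2/π)^s * (π/2 - θ)^s) volume 0 (π/2) := by
  have h1 : IntervalIntegrable (fun x : ℝ => x ^ s) volume 0 (π/2) :=
    intervalIntegral.intervalIntegrable_rpow' hs
  simpa using ((h1.comp_sub_left (π/2)).const_mul ((2/π)^s)).symm

lemma J_le {s : ℝ} (hs : -1 < s) (hs0 : s ≤ 0) : J s ≤ π/2 / (s+1) := by
  have hpi := Real.pi_pos
  have hs1 : 0 < s + 1 := by linarith
  have hmono : J s ≤ ∫ θ in (0:ℝ)..(π/2), (2/π)^s * (π/2-θ)^s := by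
    apply intervalIntegral.integral_mono_on (by positivity)
      (intervalIntegrable_cos_rpow hs) (intg_aff hs)
    intro θ hθ
    rcases eq_or_lt_of_le hθ.2 with he | hlt
    · rcases eq_or_lt_of_le hs0 with hseq | hslt
      · simp [hseq]
      · subst he
        rw [Real.cos_pi_div_two, Real.zero_rpow hslt.ne]
        have h4 : (0:ℝ) ≤ (2/π:ℝ)^s := Real.rpow_nonneg (by positivity) s
        have h5 : (0:ℝ) ≤ (π/2 - π/2:ℝ)^s := Real.rpow_nonneg (by linarith) s
        exact mul_nonneg h4 h5
    · have hlbpos : 0 < 2/π * (π/2 - θ) := by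
        have : 0 < π/2 - θ := by linarith
        positivity
      calc Real.cos θ ^ s ≤ (2/π * (π/2-θ))^s :=
            Real.rpow_le_rpow_of_nonpos hlbpos (cos_lb hθ.1 hθ.2) hs0
        _ = (2/π)^s * (π/2-θ)^s := Real.mul_rpow (by positivity) (by linarith)
  have hval : (∫ θ in (0:ℝ)..(π/2), (2/π)^s*(π/2-θ)^s) = (2/π)^s * ((π/2)^(s+1)/(s+1)) := by
    rw [intervalIntegral.integral_const_mul]
    congr 1
    rw [intervalIntegral.integral_comp_sub_left (fun x => x^s) (π/2)]
    simp only [sub_self, sub_zero]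
    rw [integral_rpow (Or.inl hs), Real.zero_rpow (by linarith : s+1 ≠ 0)]
    ring
  have hone : (2/π:ℝ)^s * (π/2)^s = 1 := by
    rw [← Real.mul_rpow (by positivity) (by positivity),
      show (2/π)*(π/2) = (1:ℝ) by field_simp]
    exact Real.one_rpow s
  have hsimp : (2/π:ℝ)^s * ((π/2)^(s+1)/(s+1)) = π/2/(s+1) := by
    rw [Real.rpow_add_one (by positivity : (π/2:ℝ) ≠ 0)]
    calc (2/π:ℝ)^s * ((π/2)^s * (π/2) / (s+1))
        = ((2/π:ℝ)^s * (π/2)^s) * (π/2) / (s+1) := by ring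
      _ = π/2/(s+1) := by rw [hone, one_mul]
  rw [hval, hsimp] at hmono
  exact hmono

set_option maxHeartbeats 2000000 in
lemma F_neg_case_le {s : ℝ} (hs : -1 < s) (hs0 : s ≤ 0) :
    ∃ b, 1 / Real.sqrt 2 < b ∧ b < 1 ∧ F s b < 0 := by
  have hpi := Real.pi_pos
  have hs1 : 0 < s + 1 := by linarith
  obtain ⟨X, hX⟩ : ∃ X : ℝ, X = π / (s+1) := ⟨_, rfl⟩
  have hXpos : 0 < X := by rw [hX]; positivity
  obtain ⟨δ, hδdef⟩ : ∃ δ : ℝ, δ = π/2 / Real.exp X := ⟨_, rfl⟩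
  have hδpos : 0 < δ := by rw [hδdef]; positivity
  have hexp : π + 1 ≤ Real.exp X := by
    have h1 : π ≤ X := by
      rw [hX, le_div_iff₀ hs1]; nlinarith
    linarith [Real.add_one_le_exp X]
  have hδlt : δ < 1/2 := by
    rw [hδdef, div_lt_iff₀ (Real.exp_pos X)]; nlinarith
  obtain ⟨b, hbdef⟩ : ∃ b : ℝ, b = Real.sqrt (1 - δ^2) := ⟨_, rfl⟩
  have hδ2 : δ^2 < 1/4 := by nlinarith
  have hb0 : 0 ≤ b := by rw [hbdef]; exact Real.sqrt_nonneg _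
  have hb2 : b^2 = 1 - δ^2 := by rw [hbdef]; exact Real.sq_sqrt (by nlinarith)
  have hb2lt : b^2 < 1 := by rw [hb2]; nlinarith
  have hblt : b < 1 := by nlinarith
  have hbgt : 1/Real.sqrt 2 < b := by
    have h1 : (1/Real.sqrt 2 : ℝ)^2 = 1/2 := by
      rw [div_pow, one_pow, Real.sq_sqrt (by norm_num : (0:ℝ) ≤ 2)]
    by_contra hcon
    push_neg at hcon
    have h2 : b^2 ≤ (1/Real.sqrt 2)^2 := by nlinarith
    rw [hb2, h1] at h2; nlinarith
  refine ⟨b, hbgt, hblt, ?_⟩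
  -- upper bound on the E part
  have hEbound : (∫ θ in (0:ℝ)..(π/2), 2 * (Real.sqrt (1 - b^2*Real.sin θ^2) * Real.cos θ^s))
      ≤ 2 * J s := by
    rw [show 2*J s = ∫ θ in (0:ℝ)..(π/2), 2 * Real.cos θ^s from
      (intervalIntegral.integral_const_mul 2 _).symm]
    apply intervalIntegral.integral_mono_on (by positivity)
      ((intgE hs b).const_mul 2) ((intervalIntegrable_cos_rpow hs).const_mul 2)
    intro θ hθ
    have hc0 : 0 ≤ Real.cos θ := Real.cos_nonneg_of_mem_Icc ⟨by linarith [hθ.1], hθ.2⟩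
    have h1 : Real.sqrt (1 - b^2*Real.sin θ^2) ≤ 1 := Real.sqrt_le_one.2 (w_le_one b θ)
    have h2 : 0 ≤ Real.cos θ^s := Real.rpow_nonneg hc0 s
    have h3 : 0 ≤ Real.sqrt (1 - b^2*Real.sin θ^2) := Real.sqrt_nonneg _
    nlinarith [mul_le_mul_of_nonneg_right h1 h2]
  -- lower bound on the K part
  have hIint : IntervalIntegrable (fun θ => ((δ + π/2) - θ)⁻¹) volume 0 (π/2) := by
    apply ContinuousOn.intervalIntegrable
    apply ContinuousOn.inv₀
    · fun_prop
    · intro θ hθ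
      rw [uIcc_of_le (by positivity)] at hθ
      have := hθ.2
      intro hzero
      nlinarith
  have hKbound : (∫ θ in (0:ℝ)..(π/2), ((δ + π/2) - θ)⁻¹)
      ≤ ∫ θ in (0:ℝ)..(π/2), Real.cos θ^s / Real.sqrt (1 - b^2*Real.sin θ^2) := by
    apply intervalIntegral.integral_mono_ae_restrict (by positivity) hIint (intgK hs hb2lt)
    rw [Filter.EventuallyLE, ae_restrict_iff' measurableSet_Icc]
    filter_upwards [ae_ne_pi_div_two] with θ hne hθ
    have hθ2 : θ < π/2 := lt_of_le_of_ne hθ.2 hne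
    have hc : 0 < Real.cos θ := Real.cos_pos_of_mem_Ioo ⟨by linarith [hθ.1], hθ2⟩
    have hcs1 : 1 ≤ Real.cos θ ^ s :=
      Real.one_le_rpow_of_pos_of_le_one_of_nonpos hc (Real.cos_le_one θ) hs0
    have hW : 1 - b^2 * Real.sin θ^2 ≤ (δ + Real.cos θ)^2 := by
      have hss := Real.sin_sq_add_cos_sq θ
      rw [hb2]
      nlinarith [Real.sin_sq_le_one θ, mul_nonneg hδpos.le hc.le]
    have hWpos : 0 < 1 - b^2 * Real.sin θ^2 := by
      have h7 := w_ge b θ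
      linarith
    have hsqW : Real.sqrt (1 - b^2 * Real.sin θ^2) ≤ (δ + π/2) - θ := by
      calc Real.sqrt (1 - b^2 * Real.sin θ^2) ≤ Real.sqrt ((δ + Real.cos θ)^2) :=
            Real.sqrt_le_sqrt hW
        _ = δ + Real.cos θ := Real.sqrt_sq (by positivity)
        _ ≤ (δ + π/2) - θ := by linarith [cos_ub hθ.2]
    have hsWpos : 0 < Real.sqrt (1 - b^2 * Real.sin θ^2) := Real.sqrt_pos.2 hWpos
    calc ((δ + π/2) - θ)⁻¹ ≤ (Real.sqrt (1 - b^2 * Real.sin θ^2))⁻¹ := inv_anti₀ hsWpos hsqW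
      _ = 1 / Real.sqrt (1 - b^2 * Real.sin θ^2) := (one_div _).symm
      _ ≤ Real.cos θ^s / Real.sqrt (1 - b^2 * Real.sin θ^2) := by
          gcongr
  have hlog : (∫ θ in (0:ℝ)..(π/2), ((δ + π/2) - θ)⁻¹) = Real.log ((δ + π/2)/δ) := by
    rw [intervalIntegral.integral_comp_sub_left (fun x => x⁻¹) (δ + π/2)]
    simp only [add_sub_cancel_right, sub_zero]
    exact integral_inv_of_pos hδpos (by positivity)
  have hFle : F s b ≤ 2 * J s - Real.log ((δ+π/2)/δ) := by
    unfold F hfun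
    rw [intervalIntegral.integral_sub ((intgE hs b).const_mul 2) (intgK hs hb2lt)]
    rw [hlog] at hKbound
    linarith [hEbound]
  have h2J : 2 * J s ≤ X := by
    have h6 := J_le hs hs0
    have heq : 2 * (π/2/(s+1)) = π/(s+1) := by ring
    rw [hX]
    linarith
  have hlog_gt : X < Real.log ((δ+π/2)/δ) := by
    have h1 : (δ+π/2)/δ = 1 + Real.exp X := by
      rw [hδdef]
      have hexpne : Real.exp X ≠ 0 := (Real.exp_pos X).ne'
      field_simp
    rw [h1]
    calc X = Real.log (Real.exp X) := (Real.log_exp X).symm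
      _ < Real.log (1 + Real.exp X) := Real.log_lt_log (Real.exp_pos X) (by linarith)
  linarith


lemma J_rec {s : ℝ} (h0 : 0 < s) (h1 : s < 1) :
    (s+1) * J (s+1) = s * J (s-1) := by
  have hpi := Real.pi_pos
  have hxcont : Continuous fun x : ℝ => x ^ s :=
    continuous_iff_continuousAt.2 fun x => Real.continuousAt_rpow_const x s (Or.inr h0.le)
  have hG : Continuous fun θ : ℝ => Real.sin θ * Real.cos θ ^ s :=
    Real.continuous_sin.mul (hxcont.comp Real.continuous_cos)
  have hderiv : ∀ θ ∈ Ioo (0:ℝ) (π/2),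
      HasDerivAt (fun θ => Real.sin θ * Real.cos θ ^ s)
        ((s+1) * Real.cos θ^(s+1) - s * Real.cos θ^(s-1)) θ := by
    intro θ hθ
    obtain ⟨hθ1, hθ2⟩ := hθ
    have hc : 0 < Real.cos θ := Real.cos_pos_of_mem_Ioo ⟨by linarith, hθ2⟩
    have hd1 : HasDerivAt (fun x : ℝ => x ^ s) (s * Real.cos θ ^ (s-1)) (Real.cos θ) := by
      simpa [mul_comm] using Real.hasDerivAt_rpow_const (x := Real.cos θ) (p := s) (Or.inl hc.ne')
    have hd2 : HasDerivAt (fun θ : ℝ => Real.cos θ ^ s)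
        (s * Real.cos θ^(s-1) * (-Real.sin θ)) θ := by
      simpa [Function.comp_def] using hd1.comp θ (Real.hasDerivAt_cos θ)
    have hd3 : HasDerivAt (fun θ => Real.sin θ * Real.cos θ ^ s)
        (Real.cos θ * Real.cos θ ^ s + Real.sin θ * (s * Real.cos θ ^ (s - 1) * -Real.sin θ)) θ :=
      (Real.hasDerivAt_sin θ).mul hd2
    convert hd3 using 1
    have e1 : Real.cos θ^(s+1) = Real.cos θ^s * Real.cos θ := Real.rpow_add_one hc.ne' s
    have e2 : Real.cos θ^s = Real.cos θ^(s-1) * Real.cos θ := by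
      have h5 := Real.rpow_add_one hc.ne' (s-1)
      rwa [sub_add_cancel] at h5
    have e3 := Real.sin_sq_add_cos_sq θ
    rw [e1, e2]
    linear_combination (s * Real.cos θ^(s-1)) * e3
  have hint : IntervalIntegrable
      (fun θ => (s+1) * Real.cos θ^(s+1) - s * Real.cos θ^(s-1)) volume 0 (π/2) :=
    ((intervalIntegrable_cos_rpow (by linarith)).const_mul (s+1)).sub
      ((intervalIntegrable_cos_rpow (by linarith)).const_mul s)
  have hftc := intervalIntegral.integral_eq_sub_of_hasDeriv_right_of_le (by positivity)
      hG.continuousOn (fun θ hθ => ((hderiv θ hθ).hasDerivWithinAt)) hint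
  have hval : (∫ θ in (0:ℝ)..(π/2), ((s+1) * Real.cos θ^(s+1) - s * Real.cos θ^(s-1))) = 0 := by
    rw [hftc, Real.cos_pi_div_two, Real.sin_pi_div_two, Real.sin_zero,
      Real.zero_rpow h0.ne', mul_zero, zero_mul, sub_zero]
  have hsplit : (∫ θ in (0:ℝ)..(π/2), ((s+1) * Real.cos θ^(s+1) - s * Real.cos θ^(s-1)))
      = (s+1) * J (s+1) - s * J (s-1) := by
    unfold J
    rw [intervalIntegral.integral_sub ((intervalIntegrable_cos_rpow (by linarith)).const_mul (s+1))
      ((intervalIntegrable_cos_rpow (by linarith)).const_mul s),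
      intervalIntegral.integral_const_mul, intervalIntegral.integral_const_mul]
  rw [hsplit] at hval
  linarith

lemma F_one_eq {s : ℝ} (h0 : 0 < s) (h1 : s < 1) :
    F s 1 = 2 * J (s+1) - J (s-1) := by
  have hpi := Real.pi_pos
  have hcong : EqOn (hfun s 1)
      (fun θ => 2 * Real.cos θ^(s+1) - Real.cos θ^(s-1)) (uIcc 0 (π/2)) := by
    intro θ hθ
    show hfun s 1 θ = 2 * Real.cos θ^(s+1) - Real.cos θ^(s-1)
    rw [uIcc_of_le (by positivity)] at hθ
    have hc0 : 0 ≤ Real.cos θ := Real.cos_nonneg_of_mem_Icc ⟨by linarith [hθ.1], hθ.2⟩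
    have hw : 1 - 1^2 * Real.sin θ^2 = Real.cos θ^2 := by
      have h5 := Real.sin_sq_add_cos_sq θ
      linarith [h5]
    unfold hfun
    rw [hw, Real.sqrt_sq hc0]
    rcases eq_or_lt_of_le hc0 with hczero | hcpos
    · rw [← hczero, Real.zero_rpow h0.ne', Real.zero_rpow (by linarith : s+1 ≠ 0),
        Real.zero_rpow (by intro h5; rw [sub_eq_zero] at h5; exact absurd h5 (ne_of_lt h1) : s-1 ≠ 0)]
      simp
    · have e1 : Real.cos θ^(s+1) = Real.cos θ^s * Real.cos θ := Real.rpow_add_one hcpos.ne' s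
      have e2 : Real.cos θ^(s-1) = Real.cos θ^s / Real.cos θ := Real.rpow_sub_one hcpos.ne' s
      simp only [e1, e2]
      ring
  unfold F
  rw [intervalIntegral.integral_congr hcong,
    intervalIntegral.integral_sub ((intervalIntegrable_cos_rpow (by linarith)).const_mul 2)
      (intervalIntegrable_cos_rpow (by linarith)),
    intervalIntegral.integral_const_mul]
  rfl

lemma F_one_neg {s : ℝ} (h0 : 0 < s) (h1 : s < 1) : F s 1 < 0 := by
  have hrec := J_rec h0 h1
  have hJm : 0 < J (s-1) := J_pos (by linarith)
  have h2 : (s+1) * (2*J (s+1) - J (s-1)) = (s-1) * J (s-1) := by linear_combination 2*hrec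
  have h3 : (s-1) * J (s-1) < 0 := mul_neg_of_neg_of_pos (by linarith) hJm
  rw [F_one_eq h0 h1]
  nlinarith [h2, h3]



lemma contOn_le_zero {s b : ℝ} (hs : -1 < s) (hb0 : 0 < b) (hb1 : b < 1)
    (hab : 1/Real.sqrt 2 ≤ b) :
    ContinuousOn (F s) (Icc (1/Real.sqrt 2) b) := by
  have hpi := Real.pi_pos
  have ha0 : (0:ℝ) ≤ 1/Real.sqrt 2 := by positivity
  have hb2 : 0 < 1 - b^2 := by nlinarith
  apply F_contOn ha0 hab hb1.le
      (bnd := fun θ => 2 * Real.cos θ^s + Real.cos θ^s / Real.sqrt (1 - b^2))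
  · exact ((intervalIntegrable_cos_rpow hs).const_mul 2).add
      ((intervalIntegrable_cos_rpow hs).div_const _)
  · intro q hq θ hθ
    obtain ⟨hθ1, hθ2⟩ := hθ
    have hc : 0 < Real.cos θ := Real.cos_pos_of_mem_Ioo ⟨by linarith, hθ2⟩
    have hcs : 0 < Real.cos θ^s := Real.rpow_pos_of_pos hc s
    have hq0 : 0 ≤ q := le_trans ha0 hq.1
    have hqb : q^2 ≤ b^2 := by nlinarith [hq.2]
    have hwge : 1 - b^2 ≤ 1 - q^2*Real.sin θ^2 := by
      have h9 := w_ge q θ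
      linarith
    have hwpos : 0 < 1 - q^2 * Real.sin θ^2 := by linarith
    have hsb : 0 < Real.sqrt (1 - b^2) := Real.sqrt_pos.2 hb2
    have hsw : 0 < Real.sqrt (1 - q^2*Real.sin θ^2) := Real.sqrt_pos.2 hwpos
    have hEle : 2 * (Real.sqrt (1 - q^2*Real.sin θ^2) * Real.cos θ^s)
        ≤ 2 * Real.cos θ^s := by
      have h8 := Real.sqrt_le_one.2 (w_le_one q θ)
      nlinarith
    have hE0 : 0 ≤ 2 * (Real.sqrt (1 - q^2*Real.sin θ^2) * Real.cos θ^s) := by positivity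
    have hK0 : 0 ≤ Real.cos θ^s / Real.sqrt (1 - q^2*Real.sin θ^2) := by positivity
    have hKle : Real.cos θ^s / Real.sqrt (1 - q^2*Real.sin θ^2)
        ≤ Real.cos θ^s / Real.sqrt (1-b^2) := by
      gcongr
    unfold hfun
    rw [abs_le]
    constructor <;> linarith

lemma contOn_pos {s : ℝ} (h0 : 0 < s) (h1 : s < 1) :
    ContinuousOn (F s) (Icc (1/Real.sqrt 2) 1) := by
  have hpi := Real.pi_pos
  have ha0 : (0:ℝ) ≤ 1/Real.sqrt 2 := by positivity
  have ha1 : (1:ℝ)/Real.sqrt 2 ≤ 1 := by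
    rw [div_le_one (by positivity)]
    nlinarith [Real.sq_sqrt (by norm_num : (0:ℝ) ≤ 2), Real.sqrt_nonneg 2]
  apply F_contOn ha0 ha1 le_rfl
      (bnd := fun θ => 2 * Real.cos θ^s + Real.cos θ^(s-1))
  · exact ((intervalIntegrable_cos_rpow (by linarith)).const_mul 2).add
      (intervalIntegrable_cos_rpow (by linarith))
  · intro q hq θ hθ
    obtain ⟨hθ1, hθ2⟩ := hθ
    have hc : 0 < Real.cos θ := Real.cos_pos_of_mem_Ioo ⟨by linarith, hθ2⟩
    have hcs : 0 < Real.cos θ^s := Real.rpow_pos_of_pos hc s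
    have hq0 : 0 ≤ q := le_trans ha0 hq.1
    have hq1 : q^2 ≤ 1 := by nlinarith [hq.2]
    have hwge := w_ge_cos_sq hq1 θ
    have hwpos : 0 < 1 - q^2 * Real.sin θ^2 := lt_of_lt_of_le (by positivity) hwge
    have hsw : 0 < Real.sqrt (1 - q^2*Real.sin θ^2) := Real.sqrt_pos.2 hwpos
    have hcle : Real.cos θ ≤ Real.sqrt (1 - q^2*Real.sin θ^2) := by
      calc Real.cos θ = Real.sqrt (Real.cos θ^2) := (Real.sqrt_sq hc.le).symm
        _ ≤ Real.sqrt (1 - q^2*Real.sin θ^2) := Real.sqrt_le_sqrt hwge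
    have hEle : 2 * (Real.sqrt (1 - q^2*Real.sin θ^2) * Real.cos θ^s)
        ≤ 2 * Real.cos θ^s := by
      have h8 := Real.sqrt_le_one.2 (w_le_one q θ)
      nlinarith
    have hE0 : 0 ≤ 2 * (Real.sqrt (1 - q^2*Real.sin θ^2) * Real.cos θ^s) := by positivity
    have hK0 : 0 ≤ Real.cos θ^s / Real.sqrt (1 - q^2*Real.sin θ^2) := by positivity
    have hKle : Real.cos θ^s / Real.sqrt (1 - q^2*Real.sin θ^2)
        ≤ Real.cos θ^(s-1) := by
      rw [Real.rpow_sub_one hc.ne']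
      gcongr
    unfold hfun
    rw [abs_le]
    have hcs1 : 0 ≤ Real.cos θ^(s-1) := Real.rpow_nonneg hc.le _
    constructor <;> linarith


end QstarAux

open QstarAux in
theorem exists_unique_qstar (p : ℝ) (hp : 1 < p) :
    ∃ q ∈ Set.Ioo (0:ℝ) 1,
      (2 * E1 p q = K1 p q ∧ 1 / Real.sqrt 2 < q) ∧
      ∀ q' ∈ Set.Ioo (0:ℝ) 1, 2 * E1 p q' = K1 p q' → q' = q := by
  have hp0 : 0 < p := by linarith
  obtain ⟨s, hsdef⟩ : ∃ s : ℝ, s = 1 - 2/p := ⟨_, rfl⟩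
  have hs : -1 < s := by
    rw [hsdef]
    have h1 : 2/p < 2 := by rw [div_lt_iff₀ hp0]; nlinarith
    linarith
  have hs2 : s < 1 := by
    rw [hsdef]
    have h1 : 0 < 2/p := by positivity
    linarith
  have ha0 : (0:ℝ) < 1/Real.sqrt 2 := by positivity
  have ha1 : (1:ℝ)/Real.sqrt 2 < 1 := by
    rw [div_lt_one (by positivity)]
    nlinarith [Real.sq_sqrt (by norm_num : (0:ℝ) ≤ 2), Real.sqrt_nonneg 2]
  obtain ⟨b, hab, hb1, hFb, hcont⟩ :
      ∃ b, 1/Real.sqrt 2 < b ∧ b ≤ 1 ∧ F s b < 0 ∧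
        ContinuousOn (F s) (Icc (1/Real.sqrt 2) b) := by
    rcases le_or_gt s 0 with hcase | hcase
    · obtain ⟨b, h1, h2, h3⟩ := F_neg_case_le hs hcase
      exact ⟨b, h1, h2.le, h3, contOn_le_zero hs (by linarith) h2 h1.le⟩
    · exact ⟨1, ha1, le_rfl, F_one_neg hcase hs2, contOn_pos hcase hs2⟩
  have hFa := F_pos_at_sqrt2 (s := s) hs
  obtain ⟨c, hcmem, hFc⟩ := intermediate_value_Icc' hab.le hcont ⟨hFb.le, hFa.le⟩
  have hca : 1/Real.sqrt 2 < c := by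
    rcases eq_or_lt_of_le hcmem.1 with h | h
    · exfalso; rw [← h] at hFc; linarith
    · exact h
  have hcb : c < b := by
    rcases eq_or_lt_of_le hcmem.2 with h | h
    · exfalso; rw [h] at hFc; linarith
    · exact h
  have hc1 : c < 1 := lt_of_lt_of_le hcb hb1
  have hc0 : 0 < c := lt_trans ha0 hca
  have hcp2 : c^2 < 1 := by nlinarith
  have hEq : 2 * E1 p c = K1 p c := by
    have h5 := F_eq_sub (q := c) hsdef hs hcp2
    linarith
  refine ⟨c, ⟨hc0, hc1⟩, ⟨hEq, hca⟩, ?_⟩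
  intro q' hq' hEq'
  have hq'2 : q'^2 < 1 := by nlinarith [hq'.1, hq'.2]
  have hFq' : F s q' = 0 := by
    rw [F_eq_sub hsdef hs hq'2]; linarith
  by_contra hne
  rcases lt_or_gt_of_ne hne with hlt | hgt
  · have h6 := F_strict_anti hs hq'.1 hlt hc1
    rw [hFq', hFc] at h6; exact lt_irrefl 0 h6
  · have h6 := F_strict_anti hs hc0 hgt hq'.2
    rw [hFq', hFc] at h6; exact lt_irrefl 0 h6
end
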